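/- arXiv:0801.3142 — 3 statements merged into one kernel-verified Lean document; each statement's English description precedes it below -/
import Mathlib

section
/- Let V be a real Hilbert space, A : V × V → ℝ a bounded (constant M) and coercive (constant m > 0) bilinear form, and B : V → V a map that is monotone, i.e. ⟨B(u) − B(v), u − v⟩ ≥ 0 for all u,v ∈ V. Suppose u ∈ V satisfies A(u,v) + ⟨B(u),v⟩ = F(v) for all v ∈ V and u_h ∈ V_h ⊆ V satisfies A(u_h,v) + ⟨B(u_h),v⟩ = F(v) for all v ∈ V_h, where F is a bounded linear functional and V_h is a closed subspace. Assume further the weak boundedness condition: ⟨B(u) − B(u_h), u − v⟩ ≤ K‖u − u_h‖‖u − v‖ for all v ∈ V_h, for some constant K > 0. Then ‖u − u_h‖ ≤ ((M + K)/m) · inf_{v ∈ V_h} ‖u − v‖. -/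
/-- Quasi-optimal a priori error estimate for a Galerkin approximation of a
semilinear problem with a monotone nonlinearity `B`. -/
theorem galerkin_quasi_optimal_monotone
    {V : Type*} [NormedAddCommGroup V] [InnerProductSpace ℝ V] [CompleteSpace V]
    (A : V →ₗ[ℝ] V →ₗ[ℝ] ℝ) (M m K : ℝ) (hm : 0 < m) (hK : 0 < K)
    (hbound : ∀ u v : V, |A u v| ≤ M * ‖u‖ * ‖v‖)
    (hcoer : ∀ u : V, m * ‖u‖ ^ 2 ≤ A u u)
    (B : V → V)
    (hmono : ∀ u v : V, 0 ≤ inner (𝕜 := ℝ) (B u - B v) (u - v))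
    (F : V →L[ℝ] ℝ)
    (Vh : Submodule ℝ V) (hVh : IsClosed (Vh : Set V))
    (u : V) (hu : ∀ v : V, A u v + inner (𝕜 := ℝ) (B u) v = F v)
    (uh : V) (huh : uh ∈ Vh)
    (huh2 : ∀ v ∈ Vh, A uh v + inner (𝕜 := ℝ) (B uh) v = F v)
    (hweak : ∀ v ∈ Vh,
      inner (𝕜 := ℝ) (B u - B uh) (u - v) ≤ K * ‖u - uh‖ * ‖u - v‖) :
    ‖u - uh‖ ≤ ((M + K) / m) * ⨅ v : Vh, ‖u - (v : V)‖ := by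
  haveI : Nonempty Vh := ⟨⟨uh, huh⟩⟩
  set e := u - uh with he
  -- Galerkin orthogonality
  have horth : ∀ w ∈ Vh, A e w = - inner (𝕜 := ℝ) (B u - B uh) w := by
    intro w hw
    have h1 := hu w
    have h2 := huh2 w hw
    have h3 : A e w = A u w - A uh w := by
      rw [he, map_sub]; rfl
    rw [h3, inner_sub_left]
    linarith
  -- key estimate
  have key : ∀ v ∈ Vh, m * ‖e‖ ^ 2 ≤ (M + K) * ‖e‖ * ‖u - v‖ := by
    intro v hv
    have hsplit : A e e = A e (u - v) + A e (v - uh) := by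
      have h : (u - v) + (v - uh) = e := by rw [he]; abel
      rw [← h, map_add]
    have horth' : A e (v - uh) = - inner (𝕜 := ℝ) (B u - B uh) (v - uh) :=
      horth _ (Vh.sub_mem hv huh)
    have hdec : (v - uh) = (u - uh) - (u - v) := by abel
    have hinner : inner (𝕜 := ℝ) (B u - B uh) (v - uh)
        = inner (𝕜 := ℝ) (B u - B uh) (u - uh)
          - inner (𝕜 := ℝ) (B u - B uh) (u - v) := by
      rw [hdec, inner_sub_right]
    have hmon := hmono u uh
    have hwk := hweak v hv
    have habs : A e (u - v) ≤ M * ‖e‖ * ‖u - v‖ :=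
      le_trans (le_abs_self _) (hbound e (u - v))
    have hco := hcoer e
    have : m * ‖e‖ ^ 2 ≤ M * ‖e‖ * ‖u - v‖ + K * ‖u - uh‖ * ‖u - v‖ := by
      rw [hsplit, horth', hinner] at hco
      linarith
    rw [← he] at this
    nlinarith [this]
  by_cases he0 : e = 0
  · -- u = uh, both sides reduce to comparing 0
    have huuh : u = uh := sub_eq_zero.mp he0
    have hbdd : BddBelow (Set.range fun v : Vh => ‖u - (v : V)‖) :=
      ⟨0, by rintro x ⟨v, rfl⟩; positivity⟩
    have hle : (⨅ v : Vh, ‖u - (v : V)‖) ≤ ‖u - uh‖ := ciInf_le hbdd ⟨uh, huh⟩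
    have hge : (0 : ℝ) ≤ ⨅ v : Vh, ‖u - (v : V)‖ :=
      le_ciInf fun v => by positivity
    have hinf0 : (⨅ v : Vh, ‖u - (v : V)‖) = 0 := by
      apply le_antisymm _ hge
      simpa [huuh] using hle
    rw [hinf0, mul_zero, he0, norm_zero]
  · have hepos : 0 < ‖e‖ := norm_pos_iff.mpr he0
    have hMK : 0 < M + K := by
      have := key uh huh
      rw [← he] at this
      have h2 : m * (‖e‖ * ‖e‖) ≤ (M + K) * (‖e‖ * ‖e‖) := by nlinarith
      have h3 := le_of_mul_le_mul_right h2 (mul_pos hepos hepos)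
      linarith
    have hlow : ∀ v : Vh, m / (M + K) * ‖e‖ ≤ ‖u - (v : V)‖ := by
      intro v
      have hk := key v v.2
      have h1 : m * ‖e‖ ≤ (M + K) * ‖u - (v : V)‖ := by nlinarith
      rw [div_mul_eq_mul_div, div_le_iff₀ hMK]
      nlinarith
    have hci := le_ciInf hlow
    rw [div_mul_eq_mul_div, div_le_iff₀ hMK] at hci
    have : ‖u - uh‖ = ‖e‖ := by rw [he]
    rw [this, div_mul_eq_mul_div, le_div_iff₀ hm]
    nlinarith
end

section
/- Let V and H be real Hilbert spaces with V continuously embedded in H. Let A : V × V → ℝ be bounded with constant M and satisfy the Gårding inequality m‖u‖_V² ≤ K‖u‖_H² + A(u,u) with m > 0, K ≥ 0. Suppose u ∈ V and u_h ∈ V_h ⊆ V satisfy the Galerkin orthogonality A(u − u_h, v) = 0 for all v in the closed subspace V_h, and suppose the error satisfies ‖u − u_h‖_H ≤ a‖u − u_h‖_V with K·a² < m/2. Then ‖u − u_h‖_V ≤ (2M/m) · inf_{v ∈ V_h} ‖u − v‖_V. -/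
/-- Schatz-type quasi-optimal error estimate under a Gårding inequality. -/
theorem schatz_quasi_optimal_garding
    {V H : Type*} [NormedAddCommGroup V] [InnerProductSpace ℝ V] [CompleteSpace V]
    [NormedAddCommGroup H] [InnerProductSpace ℝ H] [CompleteSpace H]
    (ι : V →L[ℝ] H) (hι : Function.Injective ι)
    (A : V →ₗ[ℝ] V →ₗ[ℝ] ℝ) (M m K : ℝ) (hm : 0 < m) (hKnn : 0 ≤ K)
    (hbound : ∀ u v : V, |A u v| ≤ M * ‖u‖ * ‖v‖)
    (hgarding : ∀ u : V, m * ‖u‖ ^ 2 ≤ K * ‖ι u‖ ^ 2 + A u u)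
    (Vh : Submodule ℝ V) (hVh : IsClosed (Vh : Set V))
    (u uh : V) (huh : uh ∈ Vh)
    (horth : ∀ v ∈ Vh, A (u - uh) v = 0)
    (a : ℝ) (hdual : ‖ι (u - uh)‖ ≤ a * ‖u - uh‖)
    (ha : K * a ^ 2 < m / 2) :
    ‖u - uh‖ ≤ (2 * M / m) * ⨅ v : Vh, ‖u - (v : V)‖ := by
  set e := u - uh with he
  have hinf_nonneg : 0 ≤ ⨅ v : Vh, ‖u - (v : V)‖ :=
    Real.iInf_nonneg fun v => norm_nonneg _
  -- key energy inequality
  have hK : K * ‖ι e‖ ^ 2 ≤ (m / 2) * ‖e‖ ^ 2 := by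
    have h1 : ‖ι e‖ ^ 2 ≤ (a * ‖e‖) ^ 2 := by
      have := hdual
      nlinarith [norm_nonneg (ι e), norm_nonneg e]
    calc K * ‖ι e‖ ^ 2 ≤ K * (a * ‖e‖) ^ 2 := by nlinarith
      _ = (K * a ^ 2) * ‖e‖ ^ 2 := by ring
      _ ≤ (m / 2) * ‖e‖ ^ 2 := by nlinarith [sq_nonneg ‖e‖]
  have henergy : (m / 2) * ‖e‖ ^ 2 ≤ A e e := by
    have := hgarding e
    linarith
  by_cases hez : ‖e‖ = 0
  · have he0 : e = 0 := norm_eq_zero.mp hez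
    have huuh : u = uh := sub_eq_zero.mp he0
    have hinf0 : (⨅ v : Vh, ‖u - (v : V)‖) ≤ 0 := by
      have : (⨅ v : Vh, ‖u - (v : V)‖) ≤ ‖u - (⟨uh, huh⟩ : Vh)‖ :=
        ciInf_le (f := fun v : Vh => ‖u - (v : V)‖) ⟨0, by rintro x ⟨v, rfl⟩; exact norm_nonneg _⟩ ⟨uh, huh⟩
      simpa [sub_eq_zero.mpr huuh] using this
    have : (⨅ v : Vh, ‖u - (v : V)‖) = 0 := le_antisymm hinf0 hinf_nonneg
    rw [hez, this, mul_zero]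
  · have hepos : 0 < ‖e‖ := lt_of_le_of_ne (norm_nonneg e) (Ne.symm hez)
    -- M > 0
    have hMpos : 0 < M := by
      have hb := (abs_le.mp (hbound e e)).2
      have hsq : ‖e‖ ^ 2 = ‖e‖ * ‖e‖ := sq ‖e‖
      nlinarith [mul_pos hepos hepos]
    -- for every v ∈ Vh : ‖e‖ ≤ (2M/m) ‖u - v‖
    have hkey : ∀ v : Vh, (m / (2 * M)) * ‖e‖ ≤ ‖u - (v : V)‖ := by
      intro v
      have hAev : A e (u - (v : V)) = A e e := by
        have hmem : uh - (v : V) ∈ Vh := Vh.sub_mem huh v.2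
        have h0 := horth _ hmem
        have : u - (v : V) = e + (uh - (v : V)) := by rw [he]; abel
        rw [this, map_add, h0, add_zero]
      have hb := (abs_le.mp (hbound e (u - (v : V)))).2
      have h1 : (m / 2) * ‖e‖ ^ 2 ≤ M * ‖e‖ * ‖u - (v : V)‖ := by
        calc (m / 2) * ‖e‖ ^ 2 ≤ A e e := henergy
          _ = A e (u - (v : V)) := hAev.symm
          _ ≤ M * ‖e‖ * ‖u - (v : V)‖ := hb
      rw [div_mul_eq_mul_div, div_le_iff₀ (by positivity)]
      nlinarith
    have hle : (m / (2 * M)) * ‖e‖ ≤ ⨅ v : Vh, ‖u - (v : V)‖ :=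
      le_ciInf hkey
    have hc : 0 < m / (2 * M) := by positivity
    have h2 : ‖e‖ ≤ (⨅ v : Vh, ‖u - (v : V)‖) / (m / (2 * M)) := by
      rw [le_div_iff₀ hc]
      linarith [mul_comm ‖e‖ (m / (2 * M))]
    calc ‖e‖ ≤ (⨅ v : Vh, ‖u - (v : V)‖) / (m / (2 * M)) := h2
      _ = (2 * M / m) * ⨅ v : Vh, ‖u - (v : V)‖ := by
          rw [div_div_eq_mul_div]; ring
end

section
/- Let the regular tetrahedron aspect-ratio measure be α(s) = R/(3r), where R and r are the radii of the circumscribed and inscribed spheres of a nondegenerate tetrahedron s ⊂ ℝ³. Then α(s) ≥ 1 for every tetrahedron, with equality if and only if s is regular. -/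
open Finset Metric Module RealInnerProductSpace

noncomputable section EulerTetraAux

/-- A chosen index different from `i`. -/
private def otherIdx (i : Fin 4) : Fin 4 := if i = 0 then 1 else 0

private lemma otherIdx_ne (i : Fin 4) : otherIdx i ≠ i := by
  unfold otherIdx
  split
  · rename_i h; subst h; decide
  · rename_i h; exact fun hh => h hh.symm

private lemma le_infDist_aux {E : Type*} [NormedAddCommGroup E] {s : Set E} {x : E} {b : ℝ}
    (hs : s.Nonempty) (h : ∀ y ∈ s, b ≤ dist x y) : b ≤ Metric.infDist x s := by
  by_contra hlt
  push_neg at hlt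
  obtain ⟨y, hy, hd⟩ := (Metric.infDist_lt_iff hs).1 hlt
  exact absurd (h y hy) (by linarith)

private lemma sq_eq_aux {a b : ℝ} (ha : 0 ≤ a) (hb : 0 ≤ b) (h : a ^ 2 = b ^ 2) : a = b := by
  refine le_antisymm ?_ ?_ <;> nlinarith

/-- Existence of a well-behaved unit normal vector to the plane spanned by the points
other than `i`. -/
private lemma exists_normal {E : Type*} [NormedAddCommGroup E] [InnerProductSpace ℝ E]
    [FiniteDimensional ℝ E] (h3 : finrank ℝ E = 3)
    {p : Fin 4 → E} (hp : AffineIndependent ℝ p) (i : Fin 4) :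
    ∃ n : E, ‖n‖ = 1 ∧
      (∀ v ∈ vectorSpan ℝ (p '' {j | j ≠ i}), ⟪v, n⟫ = 0) ∧
      0 < ⟪p i - p (otherIdx i), n⟫ ∧
      (∀ x : E, (∀ v ∈ vectorSpan ℝ (p '' {j | j ≠ i}), ⟪v, x⟫ = 0) →
        x = ⟪x, n⟫ • n) ∧
      (∀ x : E,
        Metric.infDist x ((affineSpan ℝ (p '' {j | j ≠ i}) : AffineSubspace ℝ E) : Set E)
          = |⟪x - p (otherIdx i), n⟫|) := by
  classical
  set K : Submodule ℝ E := vectorSpan ℝ (p '' {j | j ≠ i}) with hKdef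
  set q : E := p (otherIdx i) with hqdef
  have hqmem : q ∈ affineSpan ℝ (p '' {j | j ≠ i}) :=
    subset_affineSpan ℝ _ ⟨otherIdx i, otherIdx_ne i, rfl⟩
  have hset : {j : Fin 4 | j ≠ i} = Set.univ \ {i} := by
    ext j; simp [Set.mem_diff]
  have hPnot : p i ∉ affineSpan ℝ (p '' {j | j ≠ i}) := by
    rw [hset]; exact hp.notMem_affineSpan_diff i Set.univ
  -- dimension of the plane direction
  have hcard : Fintype.card {j : Fin 4 // j ≠ i} = 3 := by
    simp [Fintype.card_subtype_compl]
  have hK2 : finrank ℝ K = 2 := by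
    have hp' : AffineIndependent ℝ (fun j : {j : Fin 4 // j ≠ i} => p j) := by
      have := hp.subtype {j | j ≠ i}
      exact this
    have him : p '' {j | j ≠ i} = Set.range (fun j : {j : Fin 4 // j ≠ i} => p j) := by
      rw [Set.image_eq_range]
      rfl
    rw [hKdef, him]
    exact hp'.finrank_vectorSpan (hc := by rw [hcard])
  have hKO1 : finrank ℝ Kᗮ = 1 := by
    have h := K.finrank_add_finrank_orthogonal
    omega
  -- a nonzero vector in the orthogonal complement
  have hbne : Kᗮ ≠ ⊥ := by
    intro h
    rw [h, finrank_bot] at hKO1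
    omega
  obtain ⟨u₀, hu₀K, hu₀ne⟩ := Submodule.exists_mem_ne_zero_of_ne_bot hbne
  have hspanu : ∀ u : E, u ∈ Kᗮ → u ≠ 0 → Submodule.span ℝ {u} = Kᗮ := by
    intro u huK hune
    refine Submodule.eq_of_le_of_finrank_le ?_ ?_
    · rwa [Submodule.span_singleton_le_iff_mem]
    · rw [finrank_span_singleton hune, hKO1]
  -- `p i - q` is not orthogonal to `u₀`
  have hnondeg : ∀ u : E, u ∈ Kᗮ → u ≠ 0 → ⟪p i - q, u⟫ ≠ 0 := by
    intro u huK hune h0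
    have hmem : p i - q ∈ Kᗮᗮ := by
      rw [Submodule.mem_orthogonal]
      intro v hv
      rw [← hspanu u huK hune, Submodule.mem_span_singleton] at hv
      obtain ⟨t, rfl⟩ := hv
      rw [real_inner_smul_left, real_inner_comm, h0, mul_zero]
    rw [Submodule.orthogonal_orthogonal] at hmem
    have hmem' : p i ∈ affineSpan ℝ (p '' {j | j ≠ i}) := by
      have h2 := AffineSubspace.vadd_mem_of_mem_direction
        (s := affineSpan ℝ (p '' {j | j ≠ i})) (v := p i - q)
        (by rw [direction_affineSpan]; exact hmem) hqmem
      simpa [vadd_eq_add, sub_add_cancel] using h2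
    exact hPnot hmem'
  -- choose a sign so that the inner product is positive
  obtain ⟨u, huK, hune, hupos⟩ :
      ∃ u : E, u ∈ Kᗮ ∧ u ≠ 0 ∧ 0 < ⟪p i - q, u⟫ := by
    rcases lt_trichotomy (⟪p i - q, u₀⟫) 0 with h | h | h
    · exact ⟨-u₀, Kᗮ.neg_mem hu₀K, neg_ne_zero.2 hu₀ne, by rw [inner_neg_right]; linarith⟩
    · exact absurd h (hnondeg u₀ hu₀K hu₀ne)
    · exact ⟨u₀, hu₀K, hu₀ne, h⟩
  have hnu : ‖u‖ ≠ 0 := norm_ne_zero_iff.2 hune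
  set n : E := ‖u‖⁻¹ • u with hndef
  have hn_norm : ‖n‖ = 1 := by
    rw [hndef, norm_smul, norm_inv, norm_norm, inv_mul_cancel₀ hnu]
  have hn_orth : ∀ v ∈ K, ⟪v, n⟫ = 0 := by
    intro v hv
    rw [hndef, real_inner_smul_right, Submodule.inner_right_of_mem_orthogonal hv huK, mul_zero]
  have hn_span : ∀ x : E, (∀ v ∈ K, ⟪v, x⟫ = 0) → x = ⟪x, n⟫ • n := by
    intro x hx
    have hxK : x ∈ Kᗮ := (K.mem_orthogonal x).2 hx
    rw [← hspanu u huK hune, Submodule.mem_span_singleton] at hxK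
    obtain ⟨t, rfl⟩ := hxK
    rw [hndef, real_inner_smul_left, real_inner_smul_right, real_inner_self_eq_norm_sq,
      smul_smul]
    congr 1
    rw [sq]
    field_simp
  refine ⟨n, hn_norm, hn_orth, ?_, hn_span, ?_⟩
  · rw [hndef, real_inner_smul_right]
    positivity
  · intro x
    refine le_antisymm ?_ ?_
    · obtain ⟨v, hvK, z, hz, hxq⟩ := K.exists_add_mem_mem_orthogonal (x - q)
      have hzspan := hn_span z fun w hw => Submodule.inner_right_of_mem_orthogonal hw hz
      have hymem : v +ᵥ q ∈ affineSpan ℝ (p '' {j | j ≠ i}) :=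
        AffineSubspace.vadd_mem_of_mem_direction
          (by rw [direction_affineSpan]; exact hvK) hqmem
      have hip : ⟪x - q, n⟫ = ⟪z, n⟫ := by
        rw [hxq, inner_add_left, hn_orth v hvK, zero_add]
      have hdx : dist x (v +ᵥ q) = |⟪x - q, n⟫| := by
        rw [dist_eq_norm]
        have hxz : x - (v +ᵥ q) = z := by
          rw [vadd_eq_add]
          have : x - (v + q) = (x - q) - v := by abel
          rw [this, hxq]; abel
        rw [hxz, hip]
        conv_lhs => rw [hzspan]
        rw [norm_smul, hn_norm, mul_one, Real.norm_eq_abs]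
      calc Metric.infDist x _ ≤ dist x (v +ᵥ q) := Metric.infDist_le_dist_of_mem hymem
        _ = |⟪x - q, n⟫| := hdx
    · refine le_infDist_aux ⟨q, hqmem⟩ fun y hy => ?_
      have hy' : y ∈ affineSpan ℝ (p '' {j | j ≠ i}) := hy
      have hyq : y - q ∈ K := by
        have := AffineSubspace.vsub_mem_direction hy' hqmem
        rwa [direction_affineSpan, vsub_eq_sub] at this
      have h1 : ⟪x - q, n⟫ = ⟪x - y, n⟫ := by
        have hxy : x - q = (x - y) + (y - q) := by abel
        rw [hxy, inner_add_left, hn_orth _ hyq, add_zero]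
      rw [h1, dist_eq_norm]
      calc |⟪x - y, n⟫| ≤ ‖x - y‖ * ‖n‖ := abs_real_inner_le_norm _ _
        _ = ‖x - y‖ := by rw [hn_norm, mul_one]

end EulerTetraAux

set_option maxHeartbeats 1000000 in
/-- Euler-type inequality for tetrahedra: for a nondegenerate tetrahedron `s`
in `ℝ³` with circumradius `R = s.circumradius` and inscribed sphere of center
`c` and radius `r` (tangent to all four faces, center inside the tetrahedron),
the normalized aspect ratio `α = R/(3r)` satisfies `α ≥ 1`, with equality iff
`s` is regular (all edges have equal length). -/
theorem tetrahedron_aspect_ratio_ge_one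
    (s : Affine.Simplex ℝ (EuclideanSpace ℝ (Fin 3)) 3)
    (c : EuclideanSpace ℝ (Fin 3)) (r : ℝ) (hr : 0 < r)
    (hc : c ∈ interior (convexHull ℝ (Set.range s.points)))
    (htangent : ∀ i : Fin 4,
      Metric.infDist c
        ((affineSpan ℝ (s.points '' {j | j ≠ i}) : AffineSubspace ℝ
            (EuclideanSpace ℝ (Fin 3))) : Set (EuclideanSpace ℝ (Fin 3))) = r) :
    1 ≤ s.circumradius / (3 * r) ∧
    (s.circumradius / (3 * r) = 1 ↔
      ∀ i j k l : Fin 4, i ≠ j → k ≠ l →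
        dist (s.points i) (s.points j) = dist (s.points k) (s.points l)) := by
  classical
  have h3 : finrank ℝ (EuclideanSpace ℝ (Fin 3)) = 3 := by simp
  set p := s.points with hpdef
  set R := s.circumradius with hRdef
  set O := s.circumcenter with hOdef
  choose n hn_norm hn_orth hn_pos hn_span hn_dist using
    fun i => exists_normal h3 s.independent i
  simp only [← hpdef] at hn_norm hn_orth hn_pos hn_span hn_dist
  set q : Fin 4 → EuclideanSpace ℝ (Fin 3) := fun i => p (otherIdx i) with hqdef
  set H : Fin 4 → ℝ := fun i => ⟪p i - q i, n i⟫ with hHdef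
  have hHpos : ∀ i, 0 < H i := hn_pos
  have hHne : ∀ i, H i ≠ 0 := fun i => ne_of_gt (hHpos i)
  -- affine basis
  have hspan_top : affineSpan ℝ (Set.range p) = ⊤ := s.span_eq_top h3
  set b : AffineBasis (Fin 4) ℝ (EuclideanSpace ℝ (Fin 3)) :=
    ⟨p, s.independent, hspan_top⟩ with hbdef
  have hb_eq : ∀ j, b j = p j := fun _ => rfl
  -- key evaluation lemma for the affine functional of face i
  have hFzero : ∀ i j, j ≠ i → ⟪p j - q i, n i⟫ = 0 := by
    intro i j hji
    refine hn_orth i _ ?_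
    have hmem1 : p j ∈ p '' {l | l ≠ i} := Set.mem_image_of_mem p hji
    have hmem2 : q i ∈ p '' {l | l ≠ i} := Set.mem_image_of_mem p (otherIdx_ne i)
    have := vsub_mem_vectorSpan ℝ hmem1 hmem2
    rwa [vsub_eq_sub] at this
  have hFcomb : ∀ (i : Fin 4) (w : Fin 4 → ℝ), (∑ j, w j) = 1 →
      ⟪(∑ j, w j • p j) - q i, n i⟫ = w i * H i := by
    intro i w hw
    have expand : (∑ j, w j • p j) - q i = ∑ j, w j • (p j - q i) := by
      simp only [smul_sub, Finset.sum_sub_distrib, ← Finset.sum_smul, hw, one_smul]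
    rw [expand, sum_inner, Finset.sum_eq_single i]
    · rw [real_inner_smul_left]
    · intro j _ hji
      rw [real_inner_smul_left, hFzero i j hji, mul_zero]
    · intro h; exact absurd (Finset.mem_univ i) h
  -- coordinates of the incenter and circumcenter
  set a : Fin 4 → ℝ := fun j => b.coord j c with hadef
  set o : Fin 4 → ℝ := fun j => b.coord j O with hodef
  have hasum : (∑ j, a j) = 1 := b.sum_coord_apply_eq_one c
  have hosum : (∑ j, o j) = 1 := b.sum_coord_apply_eq_one O
  have hc_comb : (∑ j, a j • p j) = c := b.linear_combination_coord_eq_self c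
  have hO_comb : (∑ j, o j • p j) = O := b.linear_combination_coord_eq_self O
  have hapos : ∀ j, 0 < a j := by
    have hrange : Set.range ⇑b = Set.range p := rfl
    rw [← hrange, b.interior_convexHull] at hc
    exact hc
  -- incenter relation : r = a i * H i
  have hr_eq : ∀ i, r = a i * H i := by
    intro i
    have h1 := hn_dist i c
    rw [htangent i] at h1
    have h2 : ⟪c - q i, n i⟫ = a i * H i := by
      rw [← hc_comb]; exact hFcomb i a hasum
    rw [h1, h2, abs_of_pos (mul_pos (hapos i) (hHpos i))]
  -- circumradius relations
  have hRdist : ∀ j, ‖p j - O‖ = R := by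
    intro j
    rw [← dist_eq_norm]
    exact s.dist_circumcenter_eq_circumradius j
  -- sums
  have hsum_r : (∑ j, r / H j) = 1 := by
    rw [← hasum]
    refine Finset.sum_congr rfl fun j _ => ?_
    rw [hr_eq j, mul_div_assoc, div_self (hHne j), mul_one]
  have hsum_o : (∑ j, (1 - o j)) = 3 := by
    have h4' : (∑ _j : Fin 4, (1:ℝ)) = 4 := by simp
    rw [Finset.sum_sub_distrib, hosum, h4']
    norm_num
  -- the key inequality : (1 - o i) * H i ≤ R
  set gw : Fin 4 → Fin 4 → ℝ := fun i j => if j = i then 0 else 1/3 with hgwdef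
  have hgw_sum : ∀ i, (∑ j, gw i j) = 1 := by
    intro i
    have h1 : ∀ j, gw i j = 1/3 - (if j = i then (1/3 : ℝ) else 0) := by
      intro j; by_cases hj : j = i <;> simp [hgwdef, hj]
    rw [Finset.sum_congr rfl fun j _ => h1 j, Finset.sum_sub_distrib,
      Finset.sum_ite_eq' Finset.univ i fun _ => (1/3 : ℝ)]
    have h4' : (∑ _j : Fin 4, (1/3:ℝ)) = 4/3 := by
      rw [Finset.sum_const]
      simp
      norm_num
    rw [h4']
    simp
    norm_num
  have hmw_sum : (∑ j, (1 - o j)/3) = 1 := by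
    rw [← Finset.sum_div, hsum_o]
    norm_num
  set m : EuclideanSpace ℝ (Fin 3) := ∑ j, ((1 - o j)/3) • p j with hmdef
  set g : Fin 4 → EuclideanSpace ℝ (Fin 3) := fun i => ∑ j, gw i j • p j with hgdef
  have hmg : ∀ i, m - g i = (3⁻¹ : ℝ) • (p i - O) := by
    intro i
    rw [hmdef, hgdef, ← hO_comb, ← Finset.sum_sub_distrib]
    simp only [← sub_smul]
    rw [smul_sub, Finset.smul_sum]
    simp only [smul_smul]
    rw [eq_sub_iff_add_eq, ← Finset.sum_add_distrib]
    simp only [← add_smul]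
    have h1 : ∀ j, ((1 - o j)/3 - gw i j + 3⁻¹ * o j) = if j = i then (3⁻¹:ℝ) else 0 := by
      intro j; by_cases hj : j = i <;> simp [hgwdef, hj] <;> ring
    rw [Finset.sum_congr rfl fun j _ => by rw [h1 j]]
    rw [Finset.sum_eq_single i]
    · simp
    · intro j _ hji; simp [hji]
    · intro h; exact absurd (Finset.mem_univ i) h
  have hinner : ∀ i, ⟪m - g i, n i⟫ = ((1 - o i)/3) * H i := by
    intro i
    have hsplit : ⟪m - g i, n i⟫ = ⟪m - q i, n i⟫ - ⟪g i - q i, n i⟫ := by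
      rw [← inner_sub_left]
      congr 1
      abel
    rw [hsplit, hFcomb i _ hmw_sum, hFcomb i _ (hgw_sum i)]
    simp [hgwdef]
  have hnormmg : ∀ i, ‖m - g i‖ = R / 3 := by
    intro i
    rw [hmg i, norm_smul, hRdist i]
    rw [norm_inv, Real.norm_ofNat]
    ring
  have hkey : ∀ i, (1 - o i) * H i ≤ R := by
    intro i
    have h1 : ⟪m - g i, n i⟫ ≤ ‖m - g i‖ * ‖n i‖ := real_inner_le_norm _ _
    rw [hinner i, hnormmg i, hn_norm i, mul_one] at h1
    linarith
  have h4 : ∀ i, 1 - o i ≤ R / H i := fun i => (le_div_iff₀ (hHpos i)).2 (hkey i)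
  have hsumR : (∑ j, R / H j) = R / r := by
    have : ∀ j, R / H j = (R / r) * (r / H j) := by
      intro j
      field_simp
    rw [Finset.sum_congr rfl fun j _ => this j, ← Finset.mul_sum, hsum_r, mul_one]
  have hmain : 3 * r ≤ R := by
    have h5 : (3:ℝ) ≤ ∑ j, R / H j := by
      rw [← hsum_o]
      exact Finset.sum_le_sum fun j _ => h4 j
    rw [hsumR] at h5
    exact (le_div_iff₀ hr).1 h5
  have h3rpos : (0:ℝ) < 3 * r := by linarith
  have hRpos : (0:ℝ) < R := lt_of_lt_of_le h3rpos hmain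
  constructor
  · rw [le_div_iff₀ h3rpos, one_mul]
    exact hmain
  constructor
  · -- equality implies regular
    intro heq
    have hReq : R = 3 * r := by
      field_simp at heq
      linarith
    have hz : ∀ i, 1 - o i = R / H i := by
      have hsum0 : (∑ j, (R / H j - (1 - o j))) = 0 := by
        rw [Finset.sum_sub_distrib, hsumR, hsum_o, hReq]
        field_simp
        ring
      have hnn : ∀ j ∈ Finset.univ, (0:ℝ) ≤ R / H j - (1 - o j) :=
        fun j _ => sub_nonneg.2 (h4 j)
      have := (Finset.sum_eq_zero_iff_of_nonneg hnn).1 hsum0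
      intro i
      have hi := this i (Finset.mem_univ i)
      linarith
    have hpar : ∀ i, p i - O = R • n i := by
      intro i
      have e1 : ⟪m - g i, n i⟫ = ‖m - g i‖ * ‖n i‖ := by
        rw [hinner i, hnormmg i, hn_norm i, mul_one, hz i, div_mul_eq_mul_div,
          div_mul_cancel₀ _ (hHne i)]
      have e2 := inner_eq_norm_mul_iff_real.1 e1
      rw [hn_norm i, one_smul, hnormmg i, hmg i] at e2
      have e3 : p i - O = (3:ℝ) • ((R/3) • n i) := by
        rw [← e2, smul_smul]
        norm_num
      rw [e3, smul_smul]
      have h33 : (3:ℝ) * (R/3) = R := by ring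
      rw [h33]
    have hperp : ∀ i j k : Fin 4, j ≠ i → k ≠ i → dist (p i) (p j) = dist (p i) (p k) := by
      intro i j k hj hk
      have hv : p j - p k ∈ vectorSpan ℝ (p '' {l | l ≠ i}) := by
        have hm1 : p j ∈ p '' {l | l ≠ i} := Set.mem_image_of_mem p hj
        have hm2 : p k ∈ p '' {l | l ≠ i} := Set.mem_image_of_mem p hk
        have := vsub_mem_vectorSpan ℝ hm1 hm2
        rwa [vsub_eq_sub] at this
      have h0 : ⟪p i - O, p j - p k⟫ = 0 := by
        rw [hpar i, real_inner_smul_left, real_inner_comm, hn_orth i _ hv, mul_zero]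
      have expand : ∀ l : Fin 4,
          dist (p i) (p l) ^ 2 = ‖p i - O‖^2 - 2 * ⟪p i - O, p l - O⟫ + ‖p l - O‖^2 := by
        intro l
        rw [dist_eq_norm]
        have hrewr : p i - p l = (p i - O) - (p l - O) := by abel
        rw [hrewr, norm_sub_sq_real]
      have hinner_eq : ⟪p i - O, p j - O⟫ = ⟪p i - O, p k - O⟫ := by
        have hsub : ⟪p i - O, p j - O⟫ - ⟪p i - O, p k - O⟫ = ⟪p i - O, p j - p k⟫ := by
          rw [← inner_sub_right]
          congr 1
          abel
        rw [h0] at hsub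
        linarith
      have hsq : dist (p i) (p j) ^ 2 = dist (p i) (p k) ^ 2 := by
        rw [expand j, expand k, hRdist j, hRdist k, hinner_eq]
      exact sq_eq_aux dist_nonneg dist_nonneg hsq
    intro i j k l hij hkl
    by_cases hik : i = k
    · subst hik
      exact hperp i j l (Ne.symm hij) (Ne.symm hkl)
    · by_cases hil : i = l
      · subst hil
        rw [hperp i j k (Ne.symm hij) (Ne.symm hik), dist_comm]
      · rw [hperp i j k (Ne.symm hij) (Ne.symm hik), dist_comm,
          hperp k i l hik (Ne.symm hkl)]
  · -- regular implies equality
    intro hreg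
    have expand : ∀ il jl : Fin 4,
        dist (p il) (p jl) ^ 2 = ‖p il - O‖^2 - 2 * ⟪p il - O, p jl - O⟫ + ‖p jl - O‖^2 := by
      intro il jl
      rw [dist_eq_norm]
      have hrewr : p il - p jl = (p il - O) - (p jl - O) := by abel
      rw [hrewr, norm_sub_sq_real]
    have hperp0 : ∀ i, ∀ v ∈ vectorSpan ℝ (p '' {j | j ≠ i}), ⟪v, p i - O⟫ = 0 := by
      intro i
      have hsub : vectorSpan ℝ (p '' {j | j ≠ i}) ≤ (ℝ ∙ (p i - O))ᗮ := by
        rw [vectorSpan_def, Submodule.span_le]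
        rintro v ⟨x, hx, y, hy, rfl⟩
        obtain ⟨jx, hjx, rfl⟩ := hx
        obtain ⟨jy, hjy, rfl⟩ := hy
        rw [SetLike.mem_coe, Submodule.mem_orthogonal_singleton_iff_inner_right]
        by_cases hxy : jx = jy
        · subst hxy; simp
        · have hd : dist (p i) (p jx) = dist (p i) (p jy) :=
            hreg i jx i jy (fun h => hjx h.symm) (fun h => hjy h.symm)
          have hsq : dist (p i) (p jx) ^ 2 = dist (p i) (p jy) ^ 2 := by rw [hd]
          rw [expand i jx, expand i jy, hRdist jx, hRdist jy] at hsq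
          have hie : ⟪p i - O, p jx - O⟫ = ⟪p i - O, p jy - O⟫ := by linarith
          have : ⟪p i - O, (p jx - O) - (p jy - O)⟫ = 0 := by
            rw [inner_sub_right, hie, sub_self]
          show ⟪p i - O, p jx - p jy⟫ = 0
          have hterm : p jx - p jy = (p jx - O) - (p jy - O) := by abel
          rw [hterm]
          exact this
      intro v hv
      have hvmem := hsub hv
      rw [Submodule.mem_orthogonal_singleton_iff_inner_left] at hvmem
      exact hvmem
    have hOn : ∀ i, p i - O = ⟪p i - O, n i⟫ • n i := fun i => hn_span i _ (hperp0 i)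
    have hto : ∀ i, ⟪p i - O, n i⟫ = (1 - o i) * H i := by
      intro i
      have h2 : ⟪O - q i, n i⟫ = o i * H i := by
        rw [← hO_comb]; exact hFcomb i o hosum
      have hsplit : ⟪p i - O, n i⟫ = ⟪p i - q i, n i⟫ - ⟪O - q i, n i⟫ := by
        rw [← inner_sub_left]
        congr 1
        abel
      rw [hsplit, h2]
      have : ⟪p i - q i, n i⟫ = H i := rfl
      rw [this]
      ring
    have habs : ∀ i, |(1 - o i) * H i| = R := by
      intro i
      have := congrArg norm (hOn i)
      rw [hRdist i, norm_smul, hn_norm i, mul_one, hto i, Real.norm_eq_abs] at this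
      exact this.symm
    have hOle : ∀ i, |o i * H i| ≤ R := by
      intro i
      have h2 : ⟪O - q i, n i⟫ = o i * H i := by
        rw [← hO_comb]; exact hFcomb i o hosum
      calc |o i * H i| = |⟪O - q i, n i⟫| := by rw [h2]
        _ ≤ ‖O - q i‖ * ‖n i‖ := abs_real_inner_le_norm _ _
        _ = ‖O - q i‖ := by rw [hn_norm i, mul_one]
        _ = R := by rw [norm_sub_rev]; exact hRdist (otherIdx i)
    have hval : ∀ i, (1 - o i) * H i = R := by
      intro i
      rcases abs_cases ((1 - o i) * H i) with ⟨h, _⟩ | ⟨h, _⟩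
      · rw [← h, habs i]
      · exfalso
        have h1 : (1 - o i) * H i = -R := by
          have h2' := habs i
          linarith
        have h2 : o i * H i = H i + R := by linear_combination (-1 : ℝ) * h1
        have h3' := hOle i
        have h4' : o i * H i ≤ |o i * H i| := le_abs_self _
        have h5' : H i ≤ 0 := by linarith
        linarith [hHpos i]
    have hz2 : ∀ i, 1 - o i = R / H i := by
      intro i
      rw [eq_div_iff (hHne i)]
      exact hval i
    have : (3:ℝ) = R / r := by
      rw [← hsum_o, ← hsumR]
      exact Finset.sum_congr rfl fun j _ => hz2 j
    have hR3r : R = 3 * r := by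
      field_simp at this
      linarith
    rw [hR3r]
    field_simp
end
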